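/- Splitting criterion for two vertices: let a, b, c, d be nonnegative real numbers with a + d + √((a − d)² + 4bc) > 0 and let W be the 2×2 matrix with rows (a, b) and (c, d). Then the spectral cyclicality of W satisfies 𝐒 ≤ 1 if and only if bc ≤ ad, i.e. the two vertices are split exactly when the product of the loop values is at least the cycle value. -/

import Mathlib

open Matrix BigOperators

/-- Spectral radius of a real square matrix: the supremum of the absolute values of the
complex eigenvalues (roots of the characteristic polynomial of the complexified matrix). -/
noncomputable def specRad {m : Type*} [Fintype m] [DecidableEq m] (W : Matrix m m ℝ) : ℝ :=
  sSup {r : ℝ | ∃ μ : ℂ, (Matrix.charpoly (W.map Complex.ofReal)).IsRoot μ ∧ r = ‖μ‖}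

/-- The principal submatrix of `W` obtained by deleting the rows and columns indexed by `S`. -/
def delSub {n : ℕ} (W : Matrix (Fin n) (Fin n) ℝ) (S : Finset (Fin n)) :
    Matrix {i : Fin n // i ∉ S} {i : Fin n // i ∉ S} ℝ :=
  W.submatrix Subtype.val Subtype.val

/-- A closed walk of length `m ≥ 1` in the weighted digraph of `W`. -/
def IsClosedWalk {n : ℕ} (W : Matrix (Fin n) (Fin n) ℝ) (m : ℕ) (v : ℕ → Fin n) : Prop :=
  1 ≤ m ∧ v 0 = v m ∧ ∀ i < m, 0 < W (v i) (v (i + 1))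

/-- A cycle: a closed walk whose first `m` vertices are pairwise distinct. -/
def IsCycle {n : ℕ} (W : Matrix (Fin n) (Fin n) ℝ) (m : ℕ) (v : ℕ → Fin n) : Prop :=
  IsClosedWalk W m v ∧ ∀ i < m, ∀ j < m, v i = v j → i = j

/-- The value of a walk: the product of the weights of its arcs. -/
noncomputable def walkValue {n : ℕ} (W : Matrix (Fin n) (Fin n) ℝ) (m : ℕ) (v : ℕ → Fin n) : ℝ :=
  ∏ i ∈ Finset.range m, W (v i) (v (i + 1))

open Polynomial in
lemma specRad_unique {m : Type*} [Fintype m] [DecidableEq m] [Unique m] (M : Matrix m m ℝ) :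
    specRad M = |M default default| := by
  have hc : Matrix.charpoly (M.map Complex.ofReal) = X - C ((M default default : ℂ)) := by
    rw [Matrix.charpoly, Matrix.det_unique, Matrix.charmatrix_apply_eq, Matrix.map_apply]
  have hset : {r : ℝ | ∃ μ : ℂ, (Matrix.charpoly (M.map Complex.ofReal)).IsRoot μ ∧
      r = ‖μ‖} = {|M default default|} := by
    ext r
    simp only [Set.mem_setOf_eq, Set.mem_singleton_iff, hc, Polynomial.IsRoot, eval_sub,
      eval_X, eval_C, sub_eq_zero]
    constructor
    · rintro ⟨μ, rfl, rfl⟩; exact (Complex.norm_real _)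
    · rintro rfl; exact ⟨_, rfl, (Complex.norm_real _).symm⟩
  rw [specRad, hset, csSup_singleton]

open Polynomial in
lemma specRad_two (a b c d : ℝ) (ha : 0 ≤ a) (hb : 0 ≤ b) (hc : 0 ≤ c) (hd : 0 ≤ d) :
    specRad !![a, b; c, d] = (a + d + Real.sqrt ((a - d) ^ 2 + 4 * b * c)) / 2 := by
  set s := Real.sqrt ((a - d) ^ 2 + 4 * b * c) with hs
  have hsnn : 0 ≤ s := Real.sqrt_nonneg _
  have hs2 : s ^ 2 = (a - d) ^ 2 + 4 * b * c := by
    rw [hs, Real.sq_sqrt]; positivity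
  set lam := (a + d + s) / 2 with hlam
  set mu2 := (a + d - s) / 2 with hmu2
  have hlamnn : 0 ≤ lam := by positivity
  have hroot : ∀ μ : ℂ, (Matrix.charpoly ((!![a, b; c, d]).map Complex.ofReal)).IsRoot μ ↔
      (μ - (lam : ℂ)) * (μ - (mu2 : ℂ)) = 0 := by
    intro μ
    have hcp : (Matrix.charpoly ((!![a, b; c, d]).map Complex.ofReal)).eval μ
        = (μ - (a:ℂ)) * (μ - (d:ℂ)) - (b:ℂ) * (c:ℂ) := by
      rw [Matrix.charpoly, Matrix.det_fin_two]
      rw [Matrix.charmatrix_apply_eq, Matrix.charmatrix_apply_eq,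
        Matrix.charmatrix_apply_ne _ _ _ (by decide), Matrix.charmatrix_apply_ne _ _ _ (by decide)]
      simp [Matrix.map_apply]
    rw [Polynomial.IsRoot, hcp]
    have h1 : (lam : ℂ) + (mu2 : ℂ) = (a : ℂ) + d := by
      push_cast [hlam, hmu2]; ring
    have h2 : (lam : ℂ) * (mu2 : ℂ) = (a : ℂ) * d - b * c := by
      have hr : lam * mu2 = a * d - b * c := by rw [hlam, hmu2]; nlinarith [hs2]
      rw [← Complex.ofReal_mul, hr]; push_cast; ring
    have key : (μ - (lam : ℂ)) * (μ - (mu2 : ℂ)) = (μ - (a:ℂ)) * (μ - (d:ℂ)) - (b:ℂ) * (c:ℂ) := by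
      linear_combination (-μ) * h1 + h2
    rw [key]
  have hSmem : lam ∈ {r : ℝ | ∃ μ : ℂ, (Matrix.charpoly ((!![a, b; c, d]).map Complex.ofReal)).IsRoot μ ∧ r = ‖μ‖} := by
    refine ⟨(lam : ℂ), (hroot _).2 (by ring), ?_⟩
    rw [Complex.norm_real, Real.norm_eq_abs, abs_of_nonneg hlamnn]
  have hub : ∀ r ∈ {r : ℝ | ∃ μ : ℂ, (Matrix.charpoly ((!![a, b; c, d]).map Complex.ofReal)).IsRoot μ ∧ r = ‖μ‖}, r ≤ lam := by
    rintro r ⟨μ, hμ, rfl⟩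
    rcases mul_eq_zero.1 ((hroot μ).1 hμ) with h | h
    · rw [sub_eq_zero.1 h, Complex.norm_real, Real.norm_eq_abs, abs_of_nonneg hlamnn]
    · rw [sub_eq_zero.1 h, Complex.norm_real, Real.norm_eq_abs]
      rw [abs_le]
      constructor <;> [skip; skip] <;> rw [hmu2, hlam] <;> nlinarith [add_nonneg ha hd]
  have : specRad !![a, b; c, d] = lam := by
    refine le_antisymm (csSup_le ⟨lam, hSmem⟩ hub) (le_csSup ⟨lam, hub⟩ hSmem)
  rw [this, hlam]

/-- **Splitting criterion for two vertices**: the spectral cyclicality of the nonnegative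
`2 × 2` matrix with rows `(a, b)` and `(c, d)` is at most `1` if and only if `bc ≤ ad`. -/
theorem splitting_criterion_two_by_two (a b c d : ℝ) (ha : 0 ≤ a) (hb : 0 ≤ b) (hc : 0 ≤ c)
    (hd : 0 ≤ d) (hpos : 0 < a + d + Real.sqrt ((a - d) ^ 2 + 4 * b * c)) :
    (∑ s : Fin 2,
        (specRad !![a, b; c, d] - specRad (delSub !![a, b; c, d] {s})) /
          specRad !![a, b; c, d]) ≤ 1 ↔ b * c ≤ a * d := by
  set s := Real.sqrt ((a - d) ^ 2 + 4 * b * c) with hs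
  have hsnn : 0 ≤ s := Real.sqrt_nonneg _
  have hs2 : s ^ 2 = (a - d) ^ 2 + 4 * b * c := by
    rw [hs, Real.sq_sqrt]; positivity
  have hρ : specRad !![a, b; c, d] = (a + d + s) / 2 := specRad_two a b c d ha hb hc hd
  have hL : 0 < (a + d + s) / 2 := by linarith
  have h0 : specRad (delSub !![a, b; c, d] {(0 : Fin 2)}) = d := by
    letI : Unique {i : Fin 2 // i ∉ ({0} : Finset (Fin 2))} :=
      ⟨⟨⟨1, by decide⟩⟩, by decide⟩
    rw [specRad_unique]
    have hdef : ((default : {i : Fin 2 // i ∉ ({0} : Finset (Fin 2))}) : Fin 2) = 1 := rfl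
    simp [delSub, Matrix.submatrix_apply, hdef, abs_of_nonneg hd]
  have h1 : specRad (delSub !![a, b; c, d] {(1 : Fin 2)}) = a := by
    letI : Unique {i : Fin 2 // i ∉ ({1} : Finset (Fin 2))} :=
      ⟨⟨⟨0, by decide⟩⟩, by decide⟩
    rw [specRad_unique]
    have hdef : ((default : {i : Fin 2 // i ∉ ({1} : Finset (Fin 2))}) : Fin 2) = 0 := rfl
    simp [delSub, Matrix.submatrix_apply, hdef, abs_of_nonneg ha]
  rw [Fin.sum_univ_two, h0, h1, hρ, ← add_div, div_le_one hL]
  constructor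
  · intro h
    have hsle : s ≤ a + d := by linarith
    nlinarith [hs2]
  · intro h
    have hle : (a - d) ^ 2 + 4 * b * c ≤ (a + d) ^ 2 := by nlinarith
    have hsle : s ≤ a + d := by
      calc s ≤ Real.sqrt ((a + d) ^ 2) := Real.sqrt_le_sqrt hle
        _ = a + d := Real.sqrt_sq (by linarith)
    linarith
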